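/- Fix ε ∈ (0,1) and N ≥ 1. For every integer time t ∈ ℕ with t > N, the strong return probability is exactly P_N(t) = ε^N. -/

import Mathlib

open MeasureTheory Real

/-- The squared modulus of the Vandermonde determinant of the points `e^{iθ_k}`:
`Δ(θ) = ∏_{1 ≤ i < j ≤ N} |e^{iθ_i} − e^{iθ_j}|²`. -/
noncomputable def vdm2 {N : ℕ} (θ : Fin N → ℝ) : ℝ :=
  ∏ i : Fin N, ∏ j ∈ Finset.Ioi i,
    ‖Complex.exp ((θ i : ℂ) * Complex.I) - Complex.exp ((θ j : ℂ) * Complex.I)‖ ^ 2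

/-- The set `Ĩ(t) = {θ ∈ [−π,π] : ∃ m ∈ ℤ, |tθ − 2πm| ≤ πε}` of initial angles whose
time-`t` evolution `e^{itθ}` lies in the arc `{e^{is} : |s| ≤ πε}`. -/
def Itil (ε t : ℝ) : Set ℝ :=
  {θ : ℝ | θ ∈ Set.Icc (-π) π ∧ ∃ m : ℤ, |t * θ - 2 * π * m| ≤ π * ε}

/-- The strong return probability
`P_N(t) = ((2π)^N N!)⁻¹ ∫_{Ĩ(t)^N} ∏_{i<j} |e^{iθ_i} − e^{iθ_j}|² dθ`. -/
noncomputable def Pstrong (ε : ℝ) (N : ℕ) (t : ℝ) : ℝ :=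
  ((2 * π) ^ N * (Nat.factorial N : ℝ))⁻¹ *
    ∫ θ in Set.univ.pi (fun _ : Fin N => Itil ε t), vdm2 θ

/-! ### Auxiliary decomposition of `Itil` into arcs -/

noncomputable def srA (ε : ℝ) (t : ℕ) (m : ℤ) : ℝ := max (-π) ((2 * π * m - π * ε) / t)
noncomputable def srB (ε : ℝ) (t : ℕ) (m : ℤ) : ℝ := min π ((2 * π * m + π * ε) / t)
noncomputable def srJ (ε : ℝ) (t : ℕ) (m : ℤ) : Set ℝ := Set.Icc (srA ε t m) (srB ε t m)
noncomputable def srM (t : ℕ) : Finset ℤ := Finset.Icc (-(t / 2 : ℕ) : ℤ) ((t / 2 : ℕ) : ℤ)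

lemma srM_bound {t : ℕ} {m : ℤ} (hm : m ∈ srM t) : -(t:ℤ) ≤ 2 * m ∧ 2 * m ≤ (t:ℤ) := by
  simp only [srM, Finset.mem_Icc] at hm
  omega

lemma Itil_eq {ε : ℝ} (hε0 : 0 < ε) (hε1 : ε < 1) {t : ℕ} (ht : 0 < t) :
    Itil ε (t : ℝ) = ⋃ m ∈ srM t, srJ ε t m := by
  have hπ := Real.pi_pos
  have htR : (0:ℝ) < t := by exact_mod_cast ht
  ext θ
  simp only [Itil, Set.mem_setOf_eq, Set.mem_Icc, Set.mem_iUnion, srJ, Set.mem_Icc, srM,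
    Finset.mem_Icc, srA, srB, max_le_iff, le_min_iff, exists_prop]
  constructor
  · rintro ⟨⟨h1, h2⟩, m, hm⟩
    rw [abs_le] at hm
    have hb1 : 2 * π * m ≤ (t:ℝ) * π + π * ε := by nlinarith [hm.1]
    have hb2 : -((t:ℝ) * π + π * ε) ≤ 2 * π * m := by nlinarith [hm.2]
    have hmlt : (2 * m : ℝ) < t + 1 := by nlinarith
    have hmgt : (-(t:ℝ) - 1) < 2 * m := by nlinarith
    have hmlt' : 2 * m ≤ (t : ℤ) := by
      have : (2 * m : ℤ) < (t : ℤ) + 1 := by exact_mod_cast hmlt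
      omega
    have hmgt' : -(t : ℤ) ≤ 2 * m := by
      have : (-(t:ℤ) - 1) < 2 * m := by exact_mod_cast hmgt
      omega
    refine ⟨m, ⟨by omega, by omega⟩, ⟨h1, ?_⟩, h2, ?_⟩
    · rw [div_le_iff₀ htR]; nlinarith [hm.2]
    · rw [le_div_iff₀ htR]; nlinarith [hm.1]
  · rintro ⟨m, _, ⟨h1, ha⟩, h2, hb⟩
    rw [div_le_iff₀ htR] at ha
    rw [le_div_iff₀ htR] at hb
    exact ⟨⟨h1, h2⟩, m, abs_le.2 ⟨by nlinarith, by nlinarith⟩⟩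

lemma srJ_disjoint {ε : ℝ} (hε1 : ε < 1) {t : ℕ} (ht : 0 < t) {m m' : ℤ} (h : m ≠ m') :
    Disjoint (srJ ε t m) (srJ ε t m') := by
  have hπ := Real.pi_pos
  have htR : (0:ℝ) < t := by exact_mod_cast ht
  rw [Set.disjoint_left]
  rintro θ ⟨hA, hB⟩ ⟨hA', hB'⟩
  have h1 : (2 * π * m - π * ε) / t ≤ θ := le_trans (le_max_right _ _) hA
  have h2 : θ ≤ (2 * π * m + π * ε) / t := le_trans hB (min_le_right _ _)
  have h1' : (2 * π * m' - π * ε) / t ≤ θ := le_trans (le_max_right _ _) hA'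
  have h2' : θ ≤ (2 * π * m' + π * ε) / t := le_trans hB' (min_le_right _ _)
  rw [div_le_iff₀ htR] at h1 h1'
  rw [le_div_iff₀ htR] at h2 h2'
  have c1 : (-1:ℝ) < (m:ℝ) - m' := by nlinarith
  have c2 : (m:ℝ) - m' < 1 := by nlinarith
  have c1' : (-1:ℤ) < m - m' := by exact_mod_cast c1
  have c2' : (m:ℤ) - m' < 1 := by exact_mod_cast c2
  omega

lemma srB_val {ε : ℝ} (hε0 : 0 < ε) (hε1 : ε < 1) {t : ℕ} (ht : 0 < t) {m : ℤ}
    (hm2 : 2 * m ≤ (t:ℤ)) :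
    srB ε t m = if 2 * m = (t:ℤ) then π else (2 * π * m + π * ε) / t := by
  have hπ := Real.pi_pos
  have htR : (0:ℝ) < t := by exact_mod_cast ht
  by_cases hc : 2 * m = (t:ℤ)
  · rw [if_pos hc]
    apply min_eq_left
    rw [le_div_iff₀ htR]
    have : (2 * m : ℝ) = t := by exact_mod_cast hc
    nlinarith
  · rw [if_neg hc]
    apply min_eq_right
    rw [div_le_iff₀ htR]
    have : (2 * m : ℝ) ≤ t - 1 := by
      have : 2 * m ≤ (t:ℤ) - 1 := by omega
      exact_mod_cast this
    nlinarith

lemma srA_val {ε : ℝ} (hε0 : 0 < ε) (hε1 : ε < 1) {t : ℕ} (ht : 0 < t) {m : ℤ}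
    (hm2 : -(t:ℤ) ≤ 2 * m) :
    srA ε t m = if 2 * m = -(t:ℤ) then -π else (2 * π * m - π * ε) / t := by
  have hπ := Real.pi_pos
  have htR : (0:ℝ) < t := by exact_mod_cast ht
  by_cases hc : 2 * m = -(t:ℤ)
  · rw [if_pos hc]
    apply max_eq_left
    rw [div_le_iff₀ htR]
    have : (2 * m : ℝ) = -(t:ℝ) := by exact_mod_cast hc
    nlinarith
  · rw [if_neg hc]
    apply max_eq_right
    rw [le_div_iff₀ htR]
    have : -(t:ℝ) + 1 ≤ 2 * m := by
      have : -(t:ℤ) + 1 ≤ 2 * m := by omega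
      exact_mod_cast this
    nlinarith

lemma srA_le_srB {ε : ℝ} (hε0 : 0 < ε) {t : ℕ} (ht : 0 < t) {m : ℤ}
    (hm : m ∈ srM t) : srA ε t m ≤ srB ε t m := by
  have hπ := Real.pi_pos
  have htR : (0:ℝ) < t := by exact_mod_cast ht
  obtain ⟨hm1, hm2⟩ := srM_bound hm
  have hm1R : -(t:ℝ) ≤ 2 * m := by exact_mod_cast hm1
  have hm2R : (2 * m : ℝ) ≤ t := by exact_mod_cast hm2
  have hc1 : srA ε t m ≤ 2 * π * m / t := by
    apply max_le
    · rw [le_div_iff₀ htR]; nlinarith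
    · rw [div_le_div_iff₀ htR htR]; nlinarith [mul_pos (mul_pos hπ hε0) htR]
  have hc2 : 2 * π * m / t ≤ srB ε t m := by
    apply le_min
    · rw [div_le_iff₀ htR]; nlinarith
    · rw [div_le_div_iff₀ htR htR]; nlinarith [mul_pos (mul_pos hπ hε0) htR]
  exact hc1.trans hc2

lemma sr_geom_sum {ω : ℂ} (h1 : ω ≠ 1) {t : ℕ} (ht : 0 < t) (hωt : ω ^ (t:ℤ) = 1) (a : ℤ) :
    ∑ m ∈ Finset.Icc a (a + t - 1), ω ^ m = 0 := by
  have hω0 : ω ≠ 0 := by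
    intro h
    rw [h, zero_zpow _ (by exact_mod_cast ht.ne')] at hωt
    exact zero_ne_one hωt
  have hmap : Finset.Icc a (a + t - 1) =
      Finset.map ⟨fun j : ℕ => a + j, show Function.Injective _ from fun x y h => by
        have : (x:ℤ) = y := by simpa using h
        exact_mod_cast this⟩ (Finset.range t) := by
    ext x
    simp only [Finset.mem_Icc, Finset.mem_map, Finset.mem_range, Function.Embedding.coeFn_mk]
    constructor
    · intro ⟨h1, h2⟩; exact ⟨(x - a).toNat, by omega, by omega⟩
    · rintro ⟨j, hj, rfl⟩; omega
  rw [hmap, Finset.sum_map]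
  simp only [Function.Embedding.coeFn_mk]
  have hcongr : ∀ j ∈ Finset.range t, ω ^ (a + (j:ℤ)) = ω ^ a * ω ^ j := by
    intro j _; rw [zpow_add₀ hω0, zpow_natCast]
  rw [Finset.sum_congr rfl hcongr, ← Finset.mul_sum, geom_sum_eq h1]
  rw [← zpow_natCast ω t, hωt]
  simp

lemma sr_exp_sum {ε : ℝ} (hε0 : 0 < ε) (hε1 : ε < 1) {t : ℕ} (ht : 0 < t) {k : ℤ}
    (hk : |k| < (t:ℤ)) (hk0 : k ≠ 0) :
    ∑ m ∈ srM t, (Complex.exp (k * srB ε t m * Complex.I)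
      - Complex.exp (k * srA ε t m * Complex.I)) = 0 := by
  have hπ := Real.pi_pos
  have htC : (t:ℂ) ≠ 0 := Nat.cast_ne_zero.mpr ht.ne'
  set ω : ℂ := Complex.exp (((2 * π * k / t : ℝ) : ℂ) * Complex.I) with hωdef
  set β : ℂ := Complex.exp (((π * ε * k / t : ℝ) : ℂ) * Complex.I) with hβdef
  have hω0 : ω ≠ 0 := Complex.exp_ne_zero _
  have hωt : ω ^ (t:ℤ) = 1 := by
    rw [hωdef, ← Complex.exp_int_mul]
    rw [show ((t:ℤ):ℂ) * (((2*π*k/t:ℝ):ℂ) * Complex.I) = (k:ℂ) * (2*π*Complex.I) by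
      push_cast; field_simp]
    exact Complex.exp_int_mul_two_pi_mul_I k
  have hω1 : ω ≠ 1 := by
    intro h
    rw [hωdef, Complex.exp_eq_one_iff] at h
    obtain ⟨n, hn⟩ := h
    have hn' : ((2*π*k/t : ℝ) : ℂ) * Complex.I = ((2*π*n : ℝ) : ℂ) * Complex.I := by
      rw [hn]; push_cast; ring
    have hr : 2*π*k/t = 2*π*n := by
      have := mul_right_cancel₀ Complex.I_ne_zero hn'
      exact_mod_cast this
    have htR : (0:ℝ) < t := by exact_mod_cast ht
    have hkr : (k:ℝ) = n * t := by
      field_simp at hr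
      nlinarith [hr]
    have hkz : k = n * t := by exact_mod_cast hkr
    have habs : |n| * (t:ℤ) < t := by
      rwa [hkz, abs_mul, abs_of_nonneg (by positivity : (0:ℤ) ≤ (t:ℤ))] at hk
    have hq : |n| < 1 := lt_of_mul_lt_mul_right (by simpa using habs) (by positivity)
    have hq' := abs_lt.mp hq
    have : n = 0 := by omega
    rw [this] at hkz; simp at hkz; exact hk0 hkz
  have hB : ∀ m ∈ srM t, Complex.exp (k * srB ε t m * Complex.I)
      = if 2*m = (t:ℤ) then ω ^ m else ω ^ m * β := by
    intro m hm
    obtain ⟨hm1, hm2⟩ := srM_bound hm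
    rw [srB_val hε0 hε1 ht hm2]
    have hωm : ω ^ m = Complex.exp ((m:ℂ) * (((2*π*k/t:ℝ):ℂ) * Complex.I)) :=
      (Complex.exp_int_mul _ _).symm
    by_cases hc : 2*m = (t:ℤ)
    · rw [if_pos hc, if_pos hc, hωm]
      congr 1
      have hC : 2*(m:ℂ) = (t:ℂ) := by exact_mod_cast hc
      push_cast
      field_simp
      linear_combination (-1 : ℂ) * hC
    · rw [if_neg hc, if_neg hc, hωm, hβdef, ← Complex.exp_add]
      congr 1
      push_cast
      field_simp
  have hA : ∀ m ∈ srM t, Complex.exp (k * srA ε t m * Complex.I)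
      = if 2*m = -(t:ℤ) then ω ^ m else ω ^ m * β⁻¹ := by
    intro m hm
    obtain ⟨hm1, hm2⟩ := srM_bound hm
    rw [srA_val hε0 hε1 ht hm1]
    have hωm : ω ^ m = Complex.exp ((m:ℂ) * (((2*π*k/t:ℝ):ℂ) * Complex.I)) :=
      (Complex.exp_int_mul _ _).symm
    by_cases hc : 2*m = -(t:ℤ)
    · rw [if_pos hc, if_pos hc, hωm]
      congr 1
      have hC : 2*(m:ℂ) = -(t:ℂ) := by exact_mod_cast hc
      push_cast
      field_simp
      linear_combination (-1 : ℂ) * hC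
    · rw [if_neg hc, if_neg hc, hωm, hβdef, ← Complex.exp_neg, ← Complex.exp_add]
      congr 1
      push_cast
      field_simp
      ring
  rw [Finset.sum_congr rfl (fun m hm => by rw [hB m hm, hA m hm])]
  rcases Nat.even_or_odd t with ⟨c, hc⟩ | ⟨c, hc⟩
  · -- even: t = c + c
    have hc1 : 1 ≤ c := by omega
    have hM : srM t = Finset.Icc (-(c:ℤ)) (c:ℤ) := by
      unfold srM; congr 1 <;> · congr 1; omega
    have hsplit : Finset.Icc (-(c:ℤ)) (c:ℤ) =
        insert (-(c:ℤ)) (insert (c:ℤ) (Finset.Icc (-(c:ℤ)+1) ((c:ℤ)-1))) := by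
      ext x; simp only [Finset.mem_Icc, Finset.mem_insert]; omega
    have hnot1 : (-(c:ℤ)) ∉ insert (c:ℤ) (Finset.Icc (-(c:ℤ)+1) ((c:ℤ)-1)) := by
      simp only [Finset.mem_insert, Finset.mem_Icc]; omega
    have hnot2 : (c:ℤ) ∉ Finset.Icc (-(c:ℤ)+1) ((c:ℤ)-1) := by
      simp only [Finset.mem_Icc]; omega
    rw [hM, hsplit, Finset.sum_insert hnot1, Finset.sum_insert hnot2]
    have e1 : (2*(-(c:ℤ)) = (t:ℤ)) = False := by simp; omega
    have e2 : (2*(-(c:ℤ)) = -(t:ℤ)) = True := by simp; omega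
    have e3 : (2*(c:ℤ) = (t:ℤ)) = True := by simp; omega
    have e4 : (2*(c:ℤ) = -(t:ℤ)) = False := by simp; omega
    simp only [e1, e2, e3, e4, if_true, if_false]
    have hinterior : ∀ m ∈ Finset.Icc (-(c:ℤ)+1) ((c:ℤ)-1),
        (if 2*m = (t:ℤ) then ω ^ m else ω ^ m * β)
          - (if 2*m = -(t:ℤ) then ω ^ m else ω ^ m * β⁻¹)
        = (β - β⁻¹) * ω ^ m := by
      intro m hm
      simp only [Finset.mem_Icc] at hm
      rw [if_neg (by omega), if_neg (by omega)]
      ring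
    rw [Finset.sum_congr rfl hinterior, ← Finset.mul_sum]
    have hωc : ω ^ (-(c:ℤ)) = ω ^ (c:ℤ) := by
      have hmul : ω ^ (c:ℤ) * ω ^ (c:ℤ) = 1 := by
        rw [← zpow_add₀ hω0]
        rw [show (c:ℤ) + (c:ℤ) = (t:ℤ) by omega]
        exact hωt
      rw [zpow_neg]
      exact inv_eq_of_mul_eq_one_right hmul
    rw [hωc]
    have hins : Finset.Icc (-(c:ℤ)+1) (c:ℤ) = insert (c:ℤ) (Finset.Icc (-(c:ℤ)+1) ((c:ℤ)-1)) := by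
      ext x; simp only [Finset.mem_Icc, Finset.mem_insert]; omega
    have hgeom : ∑ m ∈ Finset.Icc (-(c:ℤ)+1) (c:ℤ), ω ^ m = 0 := by
      have := sr_geom_sum hω1 ht hωt (-(c:ℤ)+1)
      rwa [show (-(c:ℤ)+1) + (t:ℤ) - 1 = (c:ℤ) by omega] at this
    rw [hins, Finset.sum_insert hnot2] at hgeom
    linear_combination (β - β⁻¹) * hgeom
  · -- odd: t = 2c + 1
    have hM : srM t = Finset.Icc (-(c:ℤ)) (c:ℤ) := by
      unfold srM; congr 1 <;> · congr 1; omega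
    rw [hM]
    have hinterior : ∀ m ∈ Finset.Icc (-(c:ℤ)) (c:ℤ),
        (if 2*m = (t:ℤ) then ω ^ m else ω ^ m * β)
          - (if 2*m = -(t:ℤ) then ω ^ m else ω ^ m * β⁻¹)
        = (β - β⁻¹) * ω ^ m := by
      intro m hm
      simp only [Finset.mem_Icc] at hm
      rw [if_neg (by omega), if_neg (by omega)]
      ring
    rw [Finset.sum_congr rfl hinterior, ← Finset.mul_sum]
    have hgeom : ∑ m ∈ Finset.Icc (-(c:ℤ)) (c:ℤ), ω ^ m = 0 := by
      have := sr_geom_sum hω1 ht hωt (-(c:ℤ))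
      rwa [show (-(c:ℤ)) + (t:ℤ) - 1 = (c:ℤ) by omega] at this
    rw [hgeom, mul_zero]

lemma sr_len_sum {ε : ℝ} (hε0 : 0 < ε) (hε1 : ε < 1) {t : ℕ} (ht : 0 < t) :
    ∑ m ∈ srM t, (srB ε t m - srA ε t m) = 2 * π * ε := by
  have hπ := Real.pi_pos
  have htR : (0:ℝ) < t := by exact_mod_cast ht
  have hval : ∀ m ∈ srM t, srB ε t m - srA ε t m =
      (if 2*m = (t:ℤ) then π else (2*π*m + π*ε)/t)
        - (if 2*m = -(t:ℤ) then -π else (2*π*m - π*ε)/t) := by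
    intro m hm
    obtain ⟨hm1, hm2⟩ := srM_bound hm
    rw [srB_val hε0 hε1 ht hm2, srA_val hε0 hε1 ht hm1]
  rw [Finset.sum_congr rfl hval]
  rcases Nat.even_or_odd t with ⟨c, hc⟩ | ⟨c, hc⟩
  · have hc1 : 1 ≤ c := by omega
    have hM : srM t = Finset.Icc (-(c:ℤ)) (c:ℤ) := by
      unfold srM; congr 1 <;> · congr 1; omega
    have hsplit : Finset.Icc (-(c:ℤ)) (c:ℤ) =
        insert (-(c:ℤ)) (insert (c:ℤ) (Finset.Icc (-(c:ℤ)+1) ((c:ℤ)-1))) := by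
      ext x; simp only [Finset.mem_Icc, Finset.mem_insert]; omega
    have hnot1 : (-(c:ℤ)) ∉ insert (c:ℤ) (Finset.Icc (-(c:ℤ)+1) ((c:ℤ)-1)) := by
      simp only [Finset.mem_insert, Finset.mem_Icc]; omega
    have hnot2 : (c:ℤ) ∉ Finset.Icc (-(c:ℤ)+1) ((c:ℤ)-1) := by
      simp only [Finset.mem_Icc]; omega
    rw [hM, hsplit, Finset.sum_insert hnot1, Finset.sum_insert hnot2]
    have e1 : (2*(-(c:ℤ)) = (t:ℤ)) = False := by simp; omega
    have e2 : (2*(-(c:ℤ)) = -(t:ℤ)) = True := by simp; omega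
    have e3 : (2*(c:ℤ) = (t:ℤ)) = True := by simp; omega
    have e4 : (2*(c:ℤ) = -(t:ℤ)) = False := by simp; omega
    simp only [e1, e2, e3, e4, if_true, if_false]
    have hinterior : ∀ m ∈ Finset.Icc (-(c:ℤ)+1) ((c:ℤ)-1),
        ((if 2*m = (t:ℤ) then π else (2*π*m + π*ε)/t)
          - (if 2*m = -(t:ℤ) then -π else (2*π*m - π*ε)/t)) = 2*π*ε/t := by
      intro m hm
      simp only [Finset.mem_Icc] at hm
      rw [if_neg (by omega), if_neg (by omega)]
      field_simp
      ring
    rw [Finset.sum_congr rfl hinterior, Finset.sum_const, Int.card_Icc]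
    have hcard : (((c:ℤ)-1) + 1 - (-(c:ℤ)+1)).toNat = 2*c - 1 := by omega
    rw [hcard, nsmul_eq_mul]
    have htc : (t:ℝ) = 2*c := by
      rw [hc]; push_cast; ring
    have hcc : ((2*c-1 : ℕ) : ℝ) = 2*(c:ℝ) - 1 := by
      push_cast [Nat.cast_sub (by omega : 1 ≤ 2*c)]; ring
    rw [hcc, htc]
    have hcR : (0:ℝ) < c := by exact_mod_cast hc1
    push_cast
    field_simp
    ring
  · have hM : srM t = Finset.Icc (-(c:ℤ)) (c:ℤ) := by
      unfold srM; congr 1 <;> · congr 1; omega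
    rw [hM]
    have hinterior : ∀ m ∈ Finset.Icc (-(c:ℤ)) (c:ℤ),
        ((if 2*m = (t:ℤ) then π else (2*π*m + π*ε)/t)
          - (if 2*m = -(t:ℤ) then -π else (2*π*m - π*ε)/t)) = 2*π*ε/t := by
      intro m hm
      simp only [Finset.mem_Icc] at hm
      rw [if_neg (by omega), if_neg (by omega)]
      field_simp
      ring
    rw [Finset.sum_congr rfl hinterior, Finset.sum_const, Int.card_Icc]
    have hcard : ((c:ℤ) + 1 - (-(c:ℤ))).toNat = 2*c + 1 := by omega
    rw [hcard, nsmul_eq_mul]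
    have htc : (t:ℝ) = 2*c + 1 := by
      rw [hc]; push_cast; ring
    rw [htc]
    push_cast
    field_simp

lemma sr_integral_Itil {ε : ℝ} (hε0 : 0 < ε) (hε1 : ε < 1) {t : ℕ} (ht : 0 < t) {k : ℤ}
    (hk : |k| < (t:ℤ)) :
    ∫ θ in Itil ε (t:ℝ), Complex.exp (k * θ * Complex.I)
      = if k = 0 then ((2*π*ε : ℝ) : ℂ) else 0 := by
  have hπ := Real.pi_pos
  have hcont : Continuous fun θ : ℝ => Complex.exp ((k:ℂ) * θ * Complex.I) := by
    apply Complex.continuous_exp.comp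
    continuity
  rw [Itil_eq hε0 hε1 ht]
  rw [MeasureTheory.integral_biUnion_finset (srM t)
      (fun m _ => by unfold srJ; exact measurableSet_Icc)
      (fun m _ m' _ h => srJ_disjoint hε1 ht h)
      (fun m _ => by unfold srJ; exact hcont.integrableOn_Icc)]
  by_cases hk0 : k = 0
  · subst hk0
    simp only [Int.cast_zero, zero_mul, Complex.exp_zero, if_pos rfl]
    have hval : ∀ m ∈ srM t, (∫ _ in srJ ε t m, (1:ℂ)) = ((srB ε t m - srA ε t m : ℝ) : ℂ) := by
      intro m hm
      rw [MeasureTheory.setIntegral_const]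
      unfold srJ
      rw [MeasureTheory.measureReal_def, Real.volume_Icc, ENNReal.toReal_ofReal (by linarith [srA_le_srB hε0 ht hm])]
      simp [Complex.real_smul]
    rw [Finset.sum_congr rfl hval]
    rw [show ∑ m ∈ srM t, ((srB ε t m - srA ε t m : ℝ):ℂ)
        = ((∑ m ∈ srM t, (srB ε t m - srA ε t m) : ℝ) : ℂ) by push_cast; ring]
    rw [sr_len_sum hε0 hε1 ht]
    simp
  · rw [if_neg hk0]
    have hval : ∀ m ∈ srM t, (∫ θ in srJ ε t m, Complex.exp (k*θ*Complex.I))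
        = (Complex.exp (k * srB ε t m * Complex.I)
            - Complex.exp (k * srA ε t m * Complex.I)) / ((k:ℂ) * Complex.I) := by
      intro m hm
      unfold srJ
      rw [MeasureTheory.integral_Icc_eq_integral_Ioc,
        ← intervalIntegral.integral_of_le (srA_le_srB hε0 ht hm)]
      have harg : ∀ θ:ℝ, (k:ℂ) * θ * Complex.I = ((k:ℂ)*Complex.I) * θ := fun θ => by ring
      simp_rw [harg]
      rw [integral_exp_mul_complex (mul_ne_zero (Int.cast_ne_zero.mpr hk0) Complex.I_ne_zero)]
    rw [Finset.sum_congr rfl hval, ← Finset.sum_div, sr_exp_sum hε0 hε1 ht hk hk0, zero_div]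

lemma sr_det_expand {N : ℕ} (v : Fin N → ℂ) :
    ∏ i : Fin N, ∏ j ∈ Finset.Ioi i, (v j - v i)
      = ∑ σ : Equiv.Perm (Fin N), ((Equiv.Perm.sign σ : ℤ) : ℂ) * ∏ a, v a ^ ((σ a : ℕ)) := by
  rw [← Matrix.det_vandermonde, Matrix.det_apply]
  apply Fintype.sum_equiv (Equiv.inv (Equiv.Perm (Fin N)))
  intro σ
  simp only [Equiv.inv_apply]
  rw [Equiv.Perm.sign_inv]
  have hprod : ∏ i, Matrix.vandermonde v (σ i) i = ∏ a, v a ^ ((σ⁻¹ a : ℕ)) := by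
    rw [← Equiv.prod_comp σ⁻¹ (fun i => Matrix.vandermonde v (σ i) i)]
    apply Finset.prod_congr rfl
    intro a _
    simp [Matrix.vandermonde]
  rw [hprod, Units.smul_def, zsmul_eq_mul]

lemma sr_vdm2_expand {N : ℕ} (θ : Fin N → ℝ) :
    (vdm2 θ : ℂ) = ∑ σ : Equiv.Perm (Fin N), ∑ τ : Equiv.Perm (Fin N),
      ((Equiv.Perm.sign σ : ℤ) : ℂ) * ((Equiv.Perm.sign τ : ℤ) : ℂ) *
        ∏ a : Fin N, Complex.exp
          (((((σ a : ℕ) : ℤ) - ((τ a : ℕ) : ℤ) : ℤ) : ℂ) * (θ a) * Complex.I) := by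
  have step1 : (vdm2 θ : ℂ) =
      (∏ i : Fin N, ∏ j ∈ Finset.Ioi i,
        (Complex.exp ((θ j : ℂ) * Complex.I) - Complex.exp ((θ i : ℂ) * Complex.I)))
      * (∏ i : Fin N, ∏ j ∈ Finset.Ioi i,
        (Complex.exp (-(θ j : ℂ) * Complex.I) - Complex.exp (-(θ i : ℂ) * Complex.I))) := by
    unfold vdm2
    rw [← Finset.prod_mul_distrib]
    push_cast
    apply Finset.prod_congr rfl
    intro i _
    rw [← Finset.prod_mul_distrib]
    apply Finset.prod_congr rfl
    intro j _
    have hconj : ∀ x : ℝ, (starRingEnd ℂ) (Complex.exp ((x:ℂ) * Complex.I))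
        = Complex.exp (-(x:ℂ) * Complex.I) := by
      intro x
      rw [← Complex.exp_conj]
      congr 1
      simp [Complex.conj_I]
    have habs : ((‖Complex.exp ((θ i : ℂ) * Complex.I)
        - Complex.exp ((θ j : ℂ) * Complex.I)‖ : ℝ) : ℂ) ^ 2
        = (Complex.exp ((θ i : ℂ) * Complex.I) - Complex.exp ((θ j : ℂ) * Complex.I))
          * ((starRingEnd ℂ) (Complex.exp ((θ i : ℂ) * Complex.I))
            - (starRingEnd ℂ) (Complex.exp ((θ j : ℂ) * Complex.I))) := by
      rw [← map_sub]
      rw [show (((‖Complex.exp ((θ i : ℂ) * Complex.I)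
          - Complex.exp ((θ j : ℂ) * Complex.I)‖ : ℝ) : ℂ) ^ 2)
        = ((((‖Complex.exp ((θ i : ℂ) * Complex.I)
          - Complex.exp ((θ j : ℂ) * Complex.I)‖)^2 : ℝ)) : ℂ) by push_cast; ring]
      rw [Complex.sq_norm, ← Complex.mul_conj]
    rw [habs, hconj, hconj]
    ring
  rw [step1, sr_det_expand, sr_det_expand, Finset.sum_mul_sum]
  apply Finset.sum_congr rfl
  intro σ _
  apply Finset.sum_congr rfl
  intro τ _
  rw [show (((Equiv.Perm.sign σ : ℤ) : ℂ) * ∏ a, Complex.exp ((θ a : ℂ) * Complex.I) ^ ((σ a : ℕ)))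
      * (((Equiv.Perm.sign τ : ℤ) : ℂ) * ∏ a, Complex.exp (-(θ a : ℂ) * Complex.I) ^ ((τ a : ℕ)))
      = ((Equiv.Perm.sign σ : ℤ) : ℂ) * ((Equiv.Perm.sign τ : ℤ) : ℂ) *
        ((∏ a, Complex.exp ((θ a : ℂ) * Complex.I) ^ ((σ a : ℕ)))
          * ∏ a, Complex.exp (-(θ a : ℂ) * Complex.I) ^ ((τ a : ℕ))) by ring]
  congr 1
  rw [← Finset.prod_mul_distrib]
  apply Finset.prod_congr rfl
  intro a _
  rw [← Complex.exp_nat_mul, ← Complex.exp_nat_mul, ← Complex.exp_add]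
  congr 1
  push_cast
  ring

lemma sr_integral_pi_prod {N : ℕ} {S : Set ℝ} (hS : MeasurableSet S) (f : Fin N → ℝ → ℂ) :
    ∫ θ in Set.univ.pi (fun _ : Fin N => S), ∏ a, f a (θ a)
      = ∏ a, ∫ x in S, f a x := by
  rw [← MeasureTheory.integral_indicator (MeasurableSet.univ_pi (fun _ => hS))]
  have hind : ∀ θ : Fin N → ℝ,
      (Set.univ.pi (fun _ : Fin N => S)).indicator (fun θ => ∏ a, f a (θ a)) θ
        = ∏ a, S.indicator (f a) (θ a) := by
    intro θ
    by_cases hθ : θ ∈ Set.univ.pi (fun _ : Fin N => S)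
    · rw [Set.indicator_of_mem hθ]
      apply Finset.prod_congr rfl
      intro a _
      rw [Set.indicator_of_mem (hθ a (Set.mem_univ a))]
    · rw [Set.indicator_of_notMem hθ]
      simp only [Set.mem_pi, Set.mem_univ, forall_true_left, not_forall] at hθ
      obtain ⟨a, ha⟩ := hθ
      symm
      apply Finset.prod_eq_zero (Finset.mem_univ a)
      rw [Set.indicator_of_notMem ha]
  simp_rw [hind]
  rw [MeasureTheory.integral_fintype_prod_volume_eq_prod (ι := Fin N) (fun a => S.indicator (f a))]
  exact Finset.prod_congr rfl fun a _ => MeasureTheory.integral_indicator hS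

lemma sr_vdm2_continuous {N : ℕ} : Continuous (vdm2 (N := N)) := by
  unfold vdm2
  apply continuous_finset_prod
  intro i _
  apply continuous_finset_prod
  intro j _
  apply Continuous.pow
  apply continuous_norm.comp
  apply Continuous.sub <;>
  · apply Complex.continuous_exp.comp
    continuity

lemma sr_main {ε : ℝ} (hε0 : 0 < ε) (hε1 : ε < 1) {N t : ℕ} (hN : 1 ≤ N) (ht : N < t) :
    ∫ θ in Set.univ.pi (fun _ : Fin N => Itil ε (t:ℝ)), vdm2 θ
      = (N.factorial : ℝ) * (2*π*ε)^N := by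
  have htpos : 0 < t := lt_of_le_of_lt (Nat.zero_le N) ht
  have hπ := Real.pi_pos
  set S := Itil ε (t:ℝ) with hSdef
  have hSmeas : MeasurableSet S := by
    rw [hSdef, Itil_eq hε0 hε1 htpos]
    exact (srM t).measurableSet_biUnion (fun m _ => by unfold srJ; exact measurableSet_Icc)
  have hScomp : IsCompact S := by
    rw [hSdef, Itil_eq hε0 hε1 htpos]
    exact (srM t).finite_toSet.isCompact_biUnion (fun m _ => by unfold srJ; exact isCompact_Icc)
  have hPiComp : IsCompact (Set.univ.pi (fun _ : Fin N => S)) :=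
    isCompact_univ_pi (fun _ => hScomp)
  have hIntTerm : ∀ σ τ : Equiv.Perm (Fin N),
      Integrable (fun θ : Fin N → ℝ =>
        ((Equiv.Perm.sign σ : ℤ) : ℂ) * ((Equiv.Perm.sign τ : ℤ) : ℂ) *
          ∏ a : Fin N, Complex.exp
            (((((σ a : ℕ) : ℤ) - ((τ a : ℕ) : ℤ) : ℤ) : ℂ) * (θ a) * Complex.I))
        (volume.restrict (Set.univ.pi (fun _ : Fin N => S))) := by
    intro σ τ
    apply ContinuousOn.integrableOn_compact hPiComp
    apply Continuous.continuousOn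
    apply continuous_const.mul
    apply continuous_finset_prod
    intro a _
    apply Complex.continuous_exp.comp
    continuity
  have hC : ∫ θ in Set.univ.pi (fun _ : Fin N => S), ((vdm2 θ : ℝ) : ℂ)
      = (N.factorial : ℝ) * ((2*π*ε : ℝ) : ℂ)^N := by
    simp only [sr_vdm2_expand]
    rw [MeasureTheory.integral_finset_sum _
      (fun σ _ => MeasureTheory.integrable_finset_sum _ (fun τ _ => hIntTerm σ τ))]
    rw [Finset.sum_congr rfl
      (fun σ _ => MeasureTheory.integral_finset_sum _ (fun τ _ => hIntTerm σ τ))]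
    have hterm : ∀ σ τ : Equiv.Perm (Fin N),
        (∫ θ in Set.univ.pi (fun _ : Fin N => S),
          ((Equiv.Perm.sign σ : ℤ) : ℂ) * ((Equiv.Perm.sign τ : ℤ) : ℂ) *
            ∏ a : Fin N, Complex.exp
              (((((σ a : ℕ) : ℤ) - ((τ a : ℕ) : ℤ) : ℤ) : ℂ) * (θ a) * Complex.I))
        = ((Equiv.Perm.sign σ : ℤ) : ℂ) * ((Equiv.Perm.sign τ : ℤ) : ℂ) *
            ∏ a : Fin N, (if σ a = τ a then ((2*π*ε : ℝ) : ℂ) else 0) := by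
      intro σ τ
      rw [MeasureTheory.integral_const_mul]
      congr 1
      rw [sr_integral_pi_prod hSmeas
        (fun a x => Complex.exp ((((( σ a : ℕ) : ℤ) - ((τ a : ℕ) : ℤ) : ℤ) : ℂ) * x * Complex.I))]
      apply Finset.prod_congr rfl
      intro a _
      have hka : |(((σ a : ℕ) : ℤ) - ((τ a : ℕ) : ℤ))| < (t:ℤ) := by
        have h1 : ((σ a : ℕ) : ℤ) < N := by exact_mod_cast (σ a).isLt
        have h2 : ((τ a : ℕ) : ℤ) < N := by exact_mod_cast (τ a).isLt
        have h3 : (0:ℤ) ≤ ((σ a : ℕ) : ℤ) := by positivity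
        have h4 : (0:ℤ) ≤ ((τ a : ℕ) : ℤ) := by positivity
        have h5 : (N:ℤ) < t := by exact_mod_cast ht
        rw [abs_lt]; omega
      rw [sr_integral_Itil hε0 hε1 htpos hka]
      by_cases h : σ a = τ a
      · rw [if_pos (by rw [h]; ring), if_pos h]
      · rw [if_neg ?_, if_neg h]
        intro hk'
        apply h
        apply Fin.ext
        omega
    rw [Finset.sum_congr rfl (fun σ _ => Finset.sum_congr rfl (fun τ _ => hterm σ τ))]
    have hdiag : ∀ σ : Equiv.Perm (Fin N),
        (∑ τ : Equiv.Perm (Fin N),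
          ((Equiv.Perm.sign σ : ℤ) : ℂ) * ((Equiv.Perm.sign τ : ℤ) : ℂ) *
            ∏ a : Fin N, (if σ a = τ a then ((2*π*ε : ℝ) : ℂ) else 0))
        = ((2*π*ε : ℝ) : ℂ)^N := by
      intro σ
      rw [Finset.sum_eq_single σ]
      · have hsgn : ((Equiv.Perm.sign σ : ℤ) : ℂ) * ((Equiv.Perm.sign σ : ℤ) : ℂ) = 1 := by
          rcases Int.units_eq_one_or (Equiv.Perm.sign σ) with h | h <;> rw [h] <;> norm_num
        rw [hsgn, one_mul]
        rw [Finset.prod_congr rfl (fun a _ => if_pos rfl), Finset.prod_const,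
          Finset.card_univ, Fintype.card_fin]
      · intro τ _ hτ
        have : ¬ (∀ a, σ a = τ a) := by
          intro h
          exact hτ (Equiv.ext fun a => (h a).symm)
        rw [not_forall] at this
        obtain ⟨a, ha⟩ := this
        have hz : (∏ b : Fin N, if σ b = τ b then ((2*π*ε : ℝ) : ℂ) else 0) = 0 :=
          Finset.prod_eq_zero (Finset.mem_univ a) (if_neg ha)
        rw [hz, mul_zero]
      · intro h
        exact absurd (Finset.mem_univ σ) h
    rw [Finset.sum_congr rfl (fun σ _ => hdiag σ), Finset.sum_const, Finset.card_univ,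
      Fintype.card_perm, Fintype.card_fin, nsmul_eq_mul]
    push_cast
    ring
  have hi : IntegrableOn vdm2 (Set.univ.pi (fun _ : Fin N => S)) volume :=
    ContinuousOn.integrableOn_compact hPiComp sr_vdm2_continuous.continuousOn
  have hcomm := ContinuousLinearMap.integral_comp_comm Complex.ofRealCLM hi
  simp only [Complex.ofRealCLM_apply] at hcomm
  rw [hcomm] at hC
  have : ((∫ θ in Set.univ.pi (fun _ : Fin N => S), vdm2 θ : ℝ) : ℂ)
      = (((N.factorial : ℝ) * (2*π*ε)^N : ℝ) : ℂ) := by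
    rw [hC]; push_cast; ring
  exact_mod_cast this

/-- For `ε ∈ (0,1)`, `N ≥ 1`, and every integer time `t > N`,
the strong return probability is exactly `P_N(t) = ε^N`. -/
theorem stmt9 (ε : ℝ) (hε : ε ∈ Set.Ioo (0 : ℝ) 1) (N : ℕ) (hN : 1 ≤ N)
    (t : ℕ) (ht : N < t) :
    Pstrong ε N (t : ℝ) = ε ^ N := by
  have hπ := Real.pi_pos
  obtain ⟨hε0, hε1⟩ := hε
  unfold Pstrong
  rw [sr_main hε0 hε1 hN ht]
  have h2π : (2*π)^N ≠ 0 := by positivity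
  have hfac : (N.factorial : ℝ) ≠ 0 := by positivity
  rw [show (2*π*ε)^N = (2*π)^N * ε^N by rw [← mul_pow]]
  field_simp
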